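/- Let n ≥ 1, k ≥ 2, and f : 𝔽_{2^n} → ℤ/2^kℤ. Define g : 𝔽_{2^n} → ℤ/2^kℤ by g(x) = f(x) + 2^{k−2}·ι(Tr(x)) + 2^{k−1}·ι(σ(1,x)). Then K_f(1,u) = H_g(1,u) for every u ∈ 𝔽_{2^n}; consequently, f is nega-gbent if and only if g is gbent. -/

import Mathlib

noncomputable section

/-- The absolute trace Tr(x) = x + x² + x⁴ + … + x^{2^{n−1}}. -/
def Tr {F : Type} [Field F] (n : ℕ) (x : F) : F :=
  ∑ i ∈ Finset.range n, x ^ (2 ^ i)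

/-- σ(c,x) = Σ_{0 ≤ i < j ≤ n−1} (cx)^{2^i} (cx)^{2^j} -/
def sig {F : Type} [Field F] (n : ℕ) (c x : F) : F :=
  ∑ j ∈ Finset.range n, ∑ i ∈ Finset.range j, (c * x) ^ (2 ^ i) * (c * x) ^ (2 ^ j)

/-- ι(e): the integer lift of e ∈ {0,1} ⊆ F. -/
def iotaN {F : Type} [Field F] [DecidableEq F] (e : F) : ℕ :=
  if e = 1 then 1 else 0

/-- ι(e) viewed in ℤ/2^kℤ. -/
def iotaZ {F : Type} [Field F] [DecidableEq F] (k : ℕ) (e : F) : ZMod (2 ^ k) :=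
  if e = 1 then 1 else 0

/-- ζ = e^{2πi/2^k}. -/
def zeta (k : ℕ) : ℂ := Complex.exp (2 * Real.pi * Complex.I / 2 ^ k)

/-- c₀ ∈ {0,1} ⊆ F equals 1 if c is odd and 0 if c is even. -/
def czero {F : Type} [Field F] (k : ℕ) (c : ZMod (2 ^ k)) : F :=
  if c.val % 2 = 1 then 1 else 0

/-- The generalized Walsh–Hadamard transform
H_f(c,u) = Σ_{x ∈ F} ζ^{c·f(x)} (−1)^{ι(Tr(ux))}. -/
def gWH {F : Type} [Field F] [Fintype F] [DecidableEq F] (n k : ℕ)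
    (f : F → ZMod (2 ^ k)) (c : ZMod (2 ^ k)) (u : F) : ℂ :=
  ∑ x : F, zeta k ^ (c * f x).val * (-1 : ℂ) ^ (iotaN (Tr n (u * x)))

/-- The nega-ℤ_{2^k}-Hadamard transform
K_f(c,u) = Σ_{x ∈ F} (−1)^{ι(Tr(ux)) + ι(σ(c₀,x))} ζ^{c·f(x)} i^{ι(Tr(c₀x))}. -/
def negaK {F : Type} [Field F] [Fintype F] [DecidableEq F] (n k : ℕ)
    (f : F → ZMod (2 ^ k)) (c : ZMod (2 ^ k)) (u : F) : ℂ :=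
  ∑ x : F, (-1 : ℂ) ^ (iotaN (Tr n (u * x)) + iotaN (sig n (czero k c) x)) *
    zeta k ^ (c * f x).val * Complex.I ^ (iotaN (Tr n (czero k c * x)))

lemma zeta_pow_full (k : ℕ) : zeta k ^ (2 ^ k) = 1 := by
  unfold zeta
  rw [← Complex.exp_nat_mul]
  rw [show ((2 ^ k : ℕ) : ℂ) * (2 * Real.pi * Complex.I / 2 ^ k) = 2 * Real.pi * Complex.I by
    push_cast; field_simp]
  exact Complex.exp_two_pi_mul_I

lemma zeta_pow_mod (k m : ℕ) : zeta k ^ (m % 2 ^ k) = zeta k ^ m := by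
  conv_rhs => rw [← Nat.mod_add_div m (2 ^ k)]
  rw [pow_add, pow_mul, zeta_pow_full, one_pow, mul_one]

lemma zeta_val_add (k : ℕ) (a b : ZMod (2 ^ k)) :
    zeta k ^ (a + b).val = zeta k ^ a.val * zeta k ^ b.val := by
  haveI : NeZero (2 ^ k) := ⟨(pow_pos (by norm_num) k).ne'⟩
  rw [ZMod.val_add, zeta_pow_mod, pow_add]

lemma zeta_pow_half (k : ℕ) (hk : 1 ≤ k) : zeta k ^ (2 ^ (k - 1)) = -1 := by
  unfold zeta
  rw [← Complex.exp_nat_mul]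
  have h2 : (2 : ℂ) ^ k = 2 ^ (k - 1) * 2 := by
    rw [← pow_succ]; congr 1; omega
  rw [show ((2 ^ (k - 1) : ℕ) : ℂ) * (2 * Real.pi * Complex.I / 2 ^ k)
      = Real.pi * Complex.I by
    push_cast
    rw [h2]
    have : (2 : ℂ) ^ (k - 1) ≠ 0 := pow_ne_zero _ two_ne_zero
    field_simp]
  exact Complex.exp_pi_mul_I

lemma zeta_pow_quarter (k : ℕ) (hk : 2 ≤ k) : zeta k ^ (2 ^ (k - 2)) = Complex.I := by
  unfold zeta
  rw [← Complex.exp_nat_mul]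
  have h2 : (2 : ℂ) ^ k = 2 ^ (k - 2) * 4 := by
    rw [show (4 : ℂ) = 2 ^ 2 by norm_num, ← pow_add]; congr 1; omega
  rw [show ((2 ^ (k - 2) : ℕ) : ℂ) * (2 * Real.pi * Complex.I / 2 ^ k)
      = ((Real.pi / 2 : ℝ) : ℂ) * Complex.I by
    push_cast
    rw [h2]
    have : (2 : ℂ) ^ (k - 2) ≠ 0 := pow_ne_zero _ two_ne_zero
    field_simp
    ring]
  rw [Complex.exp_mul_I, ← Complex.ofReal_cos, ← Complex.ofReal_sin,
    Real.cos_pi_div_two, Real.sin_pi_div_two]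
  simp

lemma hP_aux {F : Type} [Field F] [DecidableEq F] (k : ℕ) (hk : 2 ≤ k) (e : F) :
    zeta k ^ ((2 ^ (k - 2) * iotaZ k e : ZMod (2 ^ k)).val) = Complex.I ^ (iotaN e) := by
  unfold iotaZ iotaN
  by_cases he : e = 1
  · simp only [he, eq_self_iff_true, if_true, mul_one, pow_one]
    have h1 : ((2 : ZMod (2 ^ k)) ^ (k - 2)) = ((2 ^ (k - 2) : ℕ) : ZMod (2 ^ k)) := by
      push_cast; ring
    have hlt : 2 ^ (k - 2) < 2 ^ k := Nat.pow_lt_pow_right (by norm_num) (by omega)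
    rw [h1, ZMod.val_natCast_of_lt hlt, zeta_pow_quarter k hk]
  · simp [he]

lemma hQ_aux {F : Type} [Field F] [DecidableEq F] (k : ℕ) (hk : 2 ≤ k) (e : F) :
    zeta k ^ ((2 ^ (k - 1) * iotaZ k e : ZMod (2 ^ k)).val) = (-1 : ℂ) ^ (iotaN e) := by
  unfold iotaZ iotaN
  by_cases he : e = 1
  · simp only [he, eq_self_iff_true, if_true, mul_one, pow_one]
    have h1 : ((2 : ZMod (2 ^ k)) ^ (k - 1)) = ((2 ^ (k - 1) : ℕ) : ZMod (2 ^ k)) := by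
      push_cast; ring
    have hlt : 2 ^ (k - 1) < 2 ^ k := Nat.pow_lt_pow_right (by norm_num) (by omega)
    rw [h1, ZMod.val_natCast_of_lt hlt, zeta_pow_half k (by omega)]
  · simp [he]

/-- With g(x) = f(x) + 2^{k−2}·ι(Tr(x)) + 2^{k−1}·ι(σ(1,x)), we have
K_f(1,u) = H_g(1,u) for every u; consequently f is nega-gbent iff g is gbent. -/
theorem stmt8 {F : Type} [Field F] [Fintype F] [DecidableEq F] (n k : ℕ)
    (hn : 1 ≤ n) (hk : 2 ≤ k) (hF : Fintype.card F = 2 ^ n)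
    (f : F → ZMod (2 ^ k))
    (g : F → ZMod (2 ^ k))
    (hg : ∀ x, g x = f x + 2 ^ (k - 2) * iotaZ k (Tr n x) +
      2 ^ (k - 1) * iotaZ k (sig n 1 x)) :
    (∀ u : F, negaK n k f 1 u = gWH n k g 1 u) ∧
    ((∀ u : F, ‖negaK n k f 1 u‖ = Real.sqrt (2 ^ n)) ↔
      (∀ u : F, ‖gWH n k g 1 u‖ = Real.sqrt (2 ^ n))) := by
  haveI : Fact (1 < 2 ^ k) := ⟨by
    have h : (2 : ℕ) ^ 1 ≤ 2 ^ k := Nat.pow_le_pow_right (by norm_num) (by omega)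
    norm_num at h; omega⟩
  have hcz : czero (F := F) k (1 : ZMod (2 ^ k)) = (1 : F) := by
    unfold czero
    rw [ZMod.val_one]
    norm_num
  have key : ∀ u : F, negaK n k f 1 u = gWH n k g 1 u := by
    intro u
    unfold negaK gWH
    apply Finset.sum_congr rfl
    intro x _
    simp only [hcz, one_mul]
    rw [hg x, zeta_val_add, zeta_val_add, hP_aux k hk, hQ_aux k hk, pow_add]
    ring
  refine ⟨key, ?_⟩
  constructor <;> intro h u
  · rw [← key u]; exact h u
  · rw [key u]; exact h u
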